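/- For any pointed simplicial set X and n ≥ 0, the homology with coefficients in the sphere spectrum Γ-set 𝔰 satisfies H_n(X, 𝔰) = π^comb_n(X) ∧ 𝔰, i.e., H_n(X, 𝔰)(k₊) = π^comb_n(X) ∧ k₊; in particular H_m(S^n, 𝔰) = {*} for m ≠ n and H_n(S^n, 𝔰) = 𝔰. -/

import Mathlib

/-- A pointed simplicial set, recorded through the data relevant for combinatorial
homotopy: levelwise pointed sets of simplices together with basepoint-preserving face
maps `d n j : X_{n+1} → X_n` (the `j`-th face, meaningful for `j ≤ n + 1`). -/
structure PSS where
  obj : ℕ → Type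
  pt : ∀ n, obj n
  d : ∀ n, ℕ → obj (n + 1) → obj n
  d_pt : ∀ n j, d n j (pt (n + 1)) = pt n

namespace PSS

/-- `x ∈ X_n` is spherical when all its faces are the basepoint; by Yoneda such simplices
are exactly the pointed simplicial maps `Sⁿ → X`. -/
def isSph (X : PSS) : ∀ n, X.obj n → Prop
  | 0 => fun _ => True
  | n + 1 => fun x => ∀ j ≤ n + 1, X.d n j x = X.pt n

/-- The set `Hom_{S*}(Sⁿ, X)` of spherical `n`-simplices. -/
def Sph (X : PSS) (n : ℕ) := {x : X.obj n // X.isSph n x}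

/-- The homotopy relation between spherical `n`-simplices (May, Definition 3.1):
`x R y` iff there is `z ∈ X_{n+1}` with `∂_j z = *` for `j < n`, `∂_n z = x`,
`∂_{n+1} z = y`. -/
def Rel (X : PSS) (n : ℕ) (a b : X.Sph n) : Prop :=
  ∃ z : X.obj (n + 1),
    (∀ j < n, X.d n j z = X.pt n) ∧ X.d n n z = a.1 ∧ X.d n (n + 1) z = b.1

/-- Combinatorial homotopy `π^comb_n(X)`: spherical `n`-simplices modulo the equivalence
relation generated by the homotopy relation `Rel`. -/
def picomb (X : PSS) (n : ℕ) := Quot (X.Rel n)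

/-- The basepoint is spherical. -/
def sphPt (X : PSS) (n : ℕ) : X.Sph n :=
  ⟨X.pt n, by cases n with
    | zero => trivial
    | succ m => exact fun j _ => X.d_pt m j⟩

/-- The basepoint of `π^comb_n(X)`. -/
def picombPt (X : PSS) (n : ℕ) : X.picomb n := Quot.mk _ (X.sphPt n)

end PSS

/-- The relation whose quotient collapses the wedge `A ∨ k₊ ⊆ A × k₊` to a point. -/
def WedgeRel (A : Type) (a0 : A) (k : ℕ) (u v : A × Fin (k + 1)) : Prop :=
  (u.1 = a0 ∨ u.2 = 0) ∧ (v.1 = a0 ∨ v.2 = 0)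

/-- The smash product `A ∧ k₊` of a pointed set `(A, a0)` with the pointed set
`k₊ = {0, 1, …, k}` (basepoint `0`). -/
def Smash (A : Type) (a0 : A) (k : ℕ) := Quot (WedgeRel A a0 k)

/-- The smash product `X ∧ k₊` of a pointed simplicial set with the discrete pointed
set `k₊`; faces act on the `X`-factor only. -/
def PSS.smash (X : PSS) (k : ℕ) : PSS where
  obj n := Smash (X.obj n) (X.pt n) k
  pt n := Quot.mk _ (X.pt n, 0)
  d n j := Quot.map (fun u => (X.d n j u.1, u.2)) (by
    rintro u v ⟨hu, hv⟩
    refine ⟨?_, ?_⟩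
    · rcases hu with h | h
      · exact Or.inl (by dsimp only; rw [h]; exact X.d_pt n j)
      · exact Or.inr h
    · rcases hv with h | h
      · exact Or.inl (by dsimp only; rw [h]; exact X.d_pt n j)
      · exact Or.inr h)
  d_pt n j := by
    show Quot.mk _ (X.d n j (X.pt (n + 1)), (0 : Fin (k + 1))) = Quot.mk _ (X.pt n, 0)
    rw [X.d_pt]

/-- The coface map `δ_j : [q] → [q+1]` (the monotone injection skipping `j`),
with the index `j` clamped into range. -/
def coface (q j : ℕ) : Fin (q + 1) → Fin (q + 2) :=
  Fin.succAbove ⟨min j (q + 1), by omega⟩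

/-- The combinatorial sphere `S^m = Δ[m]/∂Δ[m]`: its nonbasepoint `q`-simplices are the
monotone surjections `[q] → [m]`; faces are precomposition with cofaces, collapsing
non-surjective composites to the basepoint. -/
def SphSS (m : ℕ) : PSS where
  obj q := Option {f : Fin (q + 1) → Fin (m + 1) // Monotone f ∧ Function.Surjective f}
  pt _ := none
  d q j x := x.bind (fun f =>
    if h : Function.Surjective (f.1 ∘ coface q j)
    then some ⟨f.1 ∘ coface q j, f.2.1.comp (Fin.strictMono_succAbove _).monotone, h⟩
    else none)
  d_pt _ _ := rfl

open Classical

namespace PSS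

theorem smash_mk_eq {A : Type} {a0 : A} {k : ℕ} {a b : A} {i j : Fin (k+1)} :
    (Quot.mk (WedgeRel A a0 k) (a,i) = Quot.mk (WedgeRel A a0 k) (b,j)) ↔
    ((a = b ∧ i = j) ∨ ((a = a0 ∨ i = 0) ∧ (b = a0 ∨ j = 0))) := by
  constructor
  · intro h
    have key : (if a = a0 ∨ i = 0 then (a0,(0:Fin (k+1))) else (a,i)) =
        (if b = a0 ∨ j = 0 then (a0,(0:Fin (k+1))) else (b,j)) :=
      congrArg (Quot.lift (fun p : A × Fin (k+1) =>
        if p.1 = a0 ∨ p.2 = 0 then (a0, (0:Fin (k+1))) else p)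
        (by rintro u v ⟨hu, hv⟩; simp only [if_pos hu, if_pos hv])) h
    by_cases h1 : a = a0 ∨ i = 0 <;> by_cases h2 : b = a0 ∨ j = 0
    · exact Or.inr ⟨h1, h2⟩
    · rw [if_pos h1, if_neg h2] at key
      exact absurd (Or.inl (congrArg Prod.fst key).symm) h2
    · rw [if_neg h1, if_pos h2] at key
      exact absurd (Or.inl (congrArg Prod.fst key)) h1
    · rw [if_neg h1, if_neg h2] at key
      exact Or.inl ⟨congrArg Prod.fst key, congrArg Prod.snd key⟩
  · rintro (⟨rfl, rfl⟩ | ⟨h1, h2⟩)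
    · rfl
    · exact Quot.sound ⟨h1, h2⟩

theorem smash_mk_pt {A : Type} {a0 : A} {k : ℕ} {a : A} {i : Fin (k+1)}
    (h : a = a0 ∨ i = 0) : Quot.mk (WedgeRel A a0 k) (a,i) = Quot.mk (WedgeRel A a0 k) (a0,0) :=
  Quot.sound ⟨h, Or.inl rfl⟩

variable {X : PSS} {k : ℕ}

theorem smash_d (n j : ℕ) (x : X.obj (n+1)) (i : Fin (k+1)) :
    (X.smash k).d n j (Quot.mk _ (x, i)) = Quot.mk _ (X.d n j x, i) := rfl

theorem smash_pt (n : ℕ) : (X.smash k).pt n = Quot.mk _ (X.pt n, 0) := rfl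

theorem sph_of {n : ℕ} {x : X.obj n} (h : X.isSph n x) (i : Fin (k+1)) :
    (X.smash k).isSph n (Quot.mk _ (x, i)) := by
  cases n with
  | zero => trivial
  | succ m =>
    intro j hj
    rw [smash_d, h j hj]
    exact smash_mk_pt (Or.inl rfl)

theorem sph_cases {n : ℕ} {x : X.obj n} {i : Fin (k+1)}
    (h : (X.smash k).isSph n (Quot.mk _ (x, i))) : i = 0 ∨ X.isSph n x := by
  cases n with
  | zero => exact Or.inr trivial
  | succ m =>
    by_cases hi : i = 0
    · exact Or.inl hi
    · refine Or.inr fun j hj => ?_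
      have := h j hj
      rw [smash_d] at this
      rcases smash_mk_eq.1 this with ⟨h1, h2⟩ | ⟨(h1 | h1), _⟩
      · exact absurd h2 hi
      · exact h1
      · exact absurd h1 hi

noncomputable def gmap (X : PSS) (k n : ℕ) :
    X.obj n × Fin (k+1) → Smash (X.picomb n) (X.picombPt n) k := fun p =>
  if h : X.isSph n p.1 then Quot.mk _ (Quot.mk _ ⟨p.1, h⟩, p.2)
  else Quot.mk _ (X.picombPt n, 0)

theorem gmap_wedge {n : ℕ} {p : X.obj n × Fin (k+1)} (h : p.1 = X.pt n ∨ p.2 = 0) :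
    gmap X k n p = Quot.mk _ (X.picombPt n, 0) := by
  unfold gmap
  refine dite (X.isSph n p.1) (fun hs => (dif_pos hs).trans ?_) (fun hs => (dif_neg hs).trans ?_)
  · rcases h with h | h
    · refine smash_mk_pt (Or.inl ?_)
      exact congrArg (Quot.mk _) (Subtype.ext h)
    · exact smash_mk_pt (Or.inr h)
  · rfl

theorem gmap_pos {n : ℕ} {x : X.obj n} (h : X.isSph n x) (i : Fin (k+1)) :
    gmap X k n (x, i) = Quot.mk _ (Quot.mk _ ⟨x, h⟩, i) := dif_pos h

theorem gmap_neg {n : ℕ} {x : X.obj n} (h : ¬ X.isSph n x) (i : Fin (k+1)) :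
    gmap X k n (x, i) = Quot.mk _ (X.picombPt n, 0) := dif_neg h

noncomputable def gbar (X : PSS) (k n : ℕ) :
    Smash (X.obj n) (X.pt n) k → Smash (X.picomb n) (X.picombPt n) k :=
  Quot.lift (gmap X k n) (by
    rintro u v ⟨hu, hv⟩
    rw [gmap_wedge hu, gmap_wedge hv])

theorem gbar_mk {n : ℕ} (x : X.obj n) (i : Fin (k+1)) :
    gbar X k n (Quot.mk _ (x, i)) = gmap X k n (x, i) := rfl

noncomputable def phi (X : PSS) (k n : ℕ) :
    (X.smash k).picomb n → Smash (X.picomb n) (X.picombPt n) k :=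
  Quot.lift (fun a => gbar X k n a.1) (by
    rintro a b ⟨z, hz0, hzn, hzn1⟩
    show X.gbar k n a.1 = X.gbar k n b.1
    obtain ⟨⟨w, i⟩, hw⟩ := Quot.exists_rep z
    by_cases hi : i = 0
    · subst hi
      have h1 : gbar X k n a.1 = Quot.mk _ (X.picombPt n, 0) := by
        rw [← hzn, ← hw, smash_d, gbar_mk]; exact gmap_wedge (Or.inr rfl)
      have h2 : gbar X k n b.1 = Quot.mk _ (X.picombPt n, 0) := by
        rw [← hzn1, ← hw, smash_d, gbar_mk]; exact gmap_wedge (Or.inr rfl)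
      rw [h1, h2]
    · have hfaces : ∀ j < n, X.d n j w = X.pt n := by
        intro j hj
        have := hz0 j hj
        rw [← hw, smash_d, smash_pt] at this
        rcases smash_mk_eq.1 this with ⟨h1, _⟩ | ⟨(h1 | h1), _⟩
        · exact h1
        · exact h1
        · exact absurd h1 hi
      have ha : X.isSph n (X.d n n w) := by
        have := a.2
        rw [← hzn, ← hw, smash_d] at this
        rcases sph_cases this with h | h
        · exact absurd h hi
        · exact h
      have hb : X.isSph n (X.d n (n+1) w) := by
        have := b.2
        rw [← hzn1, ← hw, smash_d] at this
        rcases sph_cases this with h | h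
        · exact absurd h hi
        · exact h
      have hrel : X.Rel n ⟨X.d n n w, ha⟩ ⟨X.d n (n+1) w, hb⟩ := ⟨w, hfaces, rfl, rfl⟩
      have h1 : gbar X k n a.1 = Quot.mk _ (Quot.mk _ ⟨X.d n n w, ha⟩, i) := by
        rw [← hzn, ← hw, smash_d, gbar_mk, gmap_pos ha]
      have h2 : gbar X k n b.1 = Quot.mk _ (Quot.mk _ ⟨X.d n (n+1) w, hb⟩, i) := by
        rw [← hzn1, ← hw, smash_d, gbar_mk, gmap_pos hb]
      rw [h1, h2]; exact congrArg (fun c : X.picomb n => Quot.mk (WedgeRel (X.picomb n) (X.picombPt n) k) (c, i)) (Quot.sound hrel))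

noncomputable def psi1 (X : PSS) (k n : ℕ) :
    X.picomb n → Fin (k+1) → (X.smash k).picomb n :=
  Quot.lift (fun x i => Quot.mk _ (⟨Quot.mk _ (x.1, i), sph_of x.2 i⟩ : (X.smash k).Sph n))
    (by
      rintro x y ⟨w, hw0, hwn, hwn1⟩
      funext i
      refine Quot.sound ⟨Quot.mk _ (w, i), ?_, ?_, ?_⟩
      · intro j hj
        rw [smash_d, hw0 j hj, smash_pt]
        exact smash_mk_pt (Or.inl rfl)
      · rw [smash_d, hwn]
      · rw [smash_d, hwn1])

theorem psi1_pt {n : ℕ} {q : Smash (X.obj n) (X.pt n) k}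
    (hpt : q = (X.smash k).pt n) (hq : (X.smash k).isSph n q) :
    Quot.mk _ (⟨q, hq⟩ : (X.smash k).Sph n) = (X.smash k).picombPt n :=
  congrArg (Quot.mk _) (Subtype.ext hpt)

noncomputable def psi (X : PSS) (k n : ℕ) :
    Smash (X.picomb n) (X.picombPt n) k → (X.smash k).picomb n :=
  Quot.lift (fun p => psi1 X k n p.1 p.2) (by
    have key : ∀ p : X.picomb n × Fin (k+1), (p.1 = X.picombPt n ∨ p.2 = 0) →
        psi1 X k n p.1 p.2 = (X.smash k).picombPt n := by
      rintro ⟨c, i⟩ h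
      induction c using Quot.ind with
      | _ x =>
        rcases h with h | h
        · -- Quot.mk x = picombPt; apply psi1 to both sides
          have := congrFun (congrArg (psi1 X k n) h) i
          rw [this]
          exact psi1_pt (smash_mk_pt (Or.inl rfl)) _
        · subst h
          exact psi1_pt (smash_mk_pt (Or.inr rfl)) _
    rintro u v ⟨hu, hv⟩
    show X.psi1 k n u.1 u.2 = X.psi1 k n v.1 v.2
    rw [key u hu, key v hv])

noncomputable def smashPicombEquiv (X : PSS) (k n : ℕ) :
    (X.smash k).picomb n ≃ Smash (X.picomb n) (X.picombPt n) k where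
  toFun := phi X k n
  invFun := psi X k n
  left_inv := by
    intro a
    induction a using Quot.ind with
    | _ s =>
      obtain ⟨⟨x, i⟩, hp⟩ := Quot.exists_rep s.1
      have hphi : phi X k n (Quot.mk _ s) = gbar X k n (Quot.mk _ (x, i)) := by
        show gbar X k n s.1 = _; rw [hp]
      by_cases h : X.isSph n x
      · rw [hphi, gbar_mk, gmap_pos h]
        show psi1 X k n (Quot.mk _ ⟨x, h⟩) i = _
        exact congrArg (Quot.mk _) (Subtype.ext hp)
      · rw [hphi, gbar_mk, gmap_neg h]
        show psi1 X k n (X.picombPt n) 0 = _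
        have hs := s.2
        rw [← hp] at hs
        rcases sph_cases hs with hi | hx
        · subst hi
          have hpt : s.1 = (X.smash k).pt n := by rw [← hp]; exact smash_mk_pt (Or.inr rfl)
          rw [show (Quot.mk _ s : (X.smash k).picomb n) = (X.smash k).picombPt n from
            congrArg (Quot.mk _) (Subtype.ext hpt)]
          exact psi1_pt (smash_mk_pt (Or.inl rfl)) _
        · exact absurd hx h
  right_inv := by
    intro b
    induction b using Quot.ind with
    | _ p =>
      obtain ⟨c, i⟩ := p
      induction c using Quot.ind with
      | _ x =>
        show phi X k n (psi1 X k n (Quot.mk _ x) i) = _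
        show gbar X k n (Quot.mk _ (x.1, i)) = _
        refine (gbar_mk _ _).trans ((gmap_pos x.2 _).trans ?_)
        exact congrArg (fun c => Quot.mk _ (Quot.mk _ c, i)) (Subtype.ext rfl)

end PSS


namespace SphComp

open Function

theorem face_surj {q r : ℕ} {g : Fin (q+2) → Fin (r+1)} (hs : Surjective g)
    {j i : Fin (q+2)} (hij : i ≠ j) (hg : g i = g j) :
    Surjective (g ∘ j.succAbove) := by
  intro c
  obtain ⟨b, hb⟩ := hs c
  by_cases hbj : b = j
  · obtain ⟨a, ha⟩ := Fin.exists_succAbove_eq hij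
    exact ⟨a, by rw [Function.comp_apply, ha, hg, ← hbj, hb]⟩
  · obtain ⟨a, ha⟩ := Fin.exists_succAbove_eq hbj
    exact ⟨a, by rw [Function.comp_apply, ha, hb]⟩

theorem init {d n c : ℕ} (g : Fin (d+1) → Fin (n+1)) (hm : Monotone g)
    (hs : Surjective g)
    (hu : ∀ j : Fin (d+1), (j:ℕ) < c → ∀ i, g i = g j → i = j) :
    ∀ t : ℕ, (h1 : t ≤ d) → (h2 : t ≤ n) → t ≤ c → g ⟨t, by omega⟩ = ⟨t, by omega⟩ := by
  intro t
  induction t with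
  | zero =>
    intro h1 h2 _
    obtain ⟨i, hi⟩ := hs ⟨0, by omega⟩
    have h0 : g ⟨0, by omega⟩ ≤ g i := hm (by simp [Fin.le_def])
    rw [hi] at h0
    exact Fin.ext (by have := Fin.le_def.1 h0; simp at this ⊢; omega)
  | succ t ih =>
    intro h1 h2 h3
    have hd1 : t + 1 < d + 1 := by omega
    have hn1 : t + 1 < n + 1 := by omega
    have hd0 : t < d + 1 := by omega
    have hn0 : t < n + 1 := by omega
    have hgt : g ⟨t, hd0⟩ = ⟨t, hn0⟩ := ih (by omega) (by omega) (by omega)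
    have hne : (g ⟨t+1, hd1⟩ : ℕ) ≠ t := by
      intro h
      have heq : g ⟨t+1, hd1⟩ = g ⟨t, hd0⟩ := by
        rw [hgt]; exact Fin.ext (by simpa using h)
      have h8 := hu ⟨t, hd0⟩ (by simp; omega) ⟨t+1, hd1⟩ heq
      have h9 := congrArg Fin.val h8
      simp at h9
    have hge : t ≤ (g ⟨t+1, hd1⟩ : ℕ) := by
      have h0 : g ⟨t, hd0⟩ ≤ g ⟨t+1, hd1⟩ := hm (by simp [Fin.le_def])
      rw [hgt] at h0
      simpa [Fin.le_def] using h0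
    have hle : (g ⟨t+1, hd1⟩ : ℕ) ≤ t+1 := by
      obtain ⟨i, hi⟩ := hs ⟨t+1, hn1⟩
      have hit : t < (i:ℕ) := by
        by_contra hc
        have h4 : i ≤ (⟨t, hd0⟩ : Fin (d+1)) := by simp [Fin.le_def]; omega
        have h5 := hm h4
        rw [hi, hgt] at h5
        have h6 := Fin.le_def.1 h5
        simp at h6
      have h6 : (⟨t+1, hd1⟩ : Fin (d+1)) ≤ i := by simp [Fin.le_def]; omega
      have h7 := hm h6
      rw [hi] at h7
      have h8 := Fin.le_def.1 h7
      simpa using h8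
    show g ⟨t+1, hd1⟩ = ⟨t+1, hn1⟩
    exact Fin.ext (by simp only [Fin.val_mk]; omega)

theorem no_surj_lt {m n : ℕ} (h : m < n) (f : Fin (m+1) → Fin (n+1)) :
    ¬ Surjective f := fun hs => by
  have := Fintype.card_le_of_surjective f hs
  simp at this; omega

theorem bij_id {n : ℕ} (f : Fin (n+1) → Fin (n+1)) (hm : Monotone f)
    (hs : Surjective f) : f = id := by
  have hinj : Injective f := Finite.injective_iff_surjective.2 hs
  funext i
  exact init f hm hs (c := n+1) (fun j _ i h => hinj h) i.1 (by omega) (by omega) (by omega)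

theorem coface_eq {q : ℕ} (j : Fin (q+2)) : coface q (j:ℕ) = Fin.succAbove j := by
  have hj : (⟨min (j:ℕ) (q+1), by omega⟩ : Fin (q+2)) = j :=
    Fin.ext (by have := j.isLt; simp only [Fin.val_mk]; omega)
  unfold coface
  rw [hj]

theorem sphss_d_some {n q : ℕ} (j : ℕ)
    (f : {f : Fin (q + 2) → Fin (n + 1) // Monotone f ∧ Surjective f})
    (hs : Surjective (f.1 ∘ coface q j)) :
    (SphSS n).d q j (some f) =
      some ⟨f.1 ∘ coface q j, f.2.1.comp (Fin.strictMono_succAbove _).monotone, hs⟩ :=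
  dif_pos hs

theorem sphss_d_none {n q : ℕ} (j : ℕ)
    (f : {f : Fin (q + 2) → Fin (n + 1) // Monotone f ∧ Surjective f})
    (hs : ¬ Surjective (f.1 ∘ coface q j)) :
    (SphSS n).d q j (some f) = none :=
  dif_neg hs

theorem not_surj_of_d_none {n q : ℕ} (j : ℕ)
    (f : {f : Fin (q + 2) → Fin (n + 1) // Monotone f ∧ Surjective f})
    (h : (SphSS n).d q j (some f) = none) : ¬ Surjective (f.1 ∘ coface q j) := by
  intro hs
  rw [sphss_d_some j f hs] at h
  exact absurd h (Option.some_ne_none _)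

theorem sphss_sph {n m : ℕ} (hmn : m ≠ n) (x : (SphSS n).obj m)
    (hx : (SphSS n).isSph m x) : x = none := by
  cases x with
  | none => rfl
  | some f =>
    rcases Nat.lt_or_ge m n with h | h
    · exact absurd f.2.2 (no_surj_lt h f.1)
    · have hnm : n < m := lt_of_le_of_ne h (Ne.symm hmn)
      cases m with
      | zero => omega
      | succ p =>
        exfalso
        have hinj : Injective f.1 := by
          intro i j hij
          by_contra hne
          have hsurj : Surjective (f.1 ∘ coface p (j:ℕ)) := by
            rw [coface_eq]
            exact face_surj f.2.2 hne hij
          exact not_surj_of_d_none (j:ℕ) f (hx (j:ℕ) (by omega)) hsurj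
        have := Fintype.card_le_of_injective f.1 hinj
        simp at this; omega

def idSub (n : ℕ) : {f : Fin (n+1) → Fin (n+1) // Monotone f ∧ Surjective f} :=
  ⟨id, monotone_id, surjective_id⟩

theorem obj_n_cases {n : ℕ} (x : (SphSS n).obj n) : x = none ∨ x = some (idSub n) := by
  cases x with
  | none => exact Or.inl rfl
  | some f => exact Or.inr (congrArg some (Subtype.ext (bij_id f.1 f.2.1 f.2.2)))

theorem id_sph (n : ℕ) : (SphSS n).isSph n (some (idSub n)) := by
  cases n with
  | zero => trivial
  | succ p =>
    intro j hj
    refine sphss_d_none j (idSub (p+1)) ?_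
    intro hs
    obtain ⟨a, ha⟩ := hs ⟨min j (p+1), by omega⟩
    exact Fin.succAbove_ne _ a ha

def idSph (n : ℕ) : (SphSS n).Sph n := ⟨some (idSub n), id_sph n⟩

theorem rel_eq {n : ℕ} (a b : (SphSS n).Sph n) (h : (SphSS n).Rel n a b) : a = b := by
  obtain ⟨z, hz0, hzn, hzn1⟩ := h
  apply Subtype.ext
  cases z with
  | none => rw [← hzn, ← hzn1]; rfl
  | some g =>
    have hu : ∀ j : Fin (n+2), (j:ℕ) < n → ∀ i, g.1 i = g.1 j → i = j := by
      intro j hj i hgi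
      by_contra hne
      have hsurj : Surjective (g.1 ∘ coface n (j:ℕ)) := by
        rw [coface_eq]
        exact face_surj g.2.2 hne hgi
      exact not_surj_of_d_none (j:ℕ) g (hz0 (j:ℕ) hj) hsurj
    have hinit : ∀ t : ℕ, (ht : t ≤ n) → g.1 ⟨t, by omega⟩ = ⟨t, by omega⟩ := fun t ht =>
      init g.1 g.2.1 g.2.2 hu t (by omega) (by omega) (by omega)
    have hn2 : n + 1 < n + 2 := by omega
    have htop : g.1 ⟨n+1, hn2⟩ = ⟨n, by omega⟩ := by
      have h1 : g.1 ⟨n, by omega⟩ ≤ g.1 ⟨n+1, hn2⟩ := g.2.1 (by simp [Fin.le_def])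
      rw [hinit n le_rfl] at h1
      have h2 := Fin.le_def.1 h1
      have h3 := (g.1 ⟨n+1, hn2⟩).isLt
      exact Fin.ext (by simp only [Fin.val_mk] at h2 ⊢; omega)
    have hcomp1 : g.1 ∘ coface n n = id := by
      funext a
      rw [Function.comp_apply]
      show g.1 (Fin.succAbove ⟨min n (n+1), by omega⟩ a) = a
      by_cases hc : (a:ℕ) < n
      · rw [Fin.succAbove_of_castSucc_lt _ _ (by simp [Fin.lt_def]; omega)]
        have hcast : (a.castSucc : Fin (n+2)) = ⟨(a:ℕ), by omega⟩ := Fin.ext (by simp)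
        rw [hcast, hinit (a:ℕ) (by omega)]
      · have ha : (a:ℕ) = n := by have := a.isLt; omega
        rw [Fin.succAbove_of_le_castSucc _ _ (by simp [Fin.le_def]; omega)]
        have hsucc : (a.succ : Fin (n+2)) = ⟨n+1, hn2⟩ := Fin.ext (show ((a.succ : Fin (n+2)) : ℕ) = n+1 by rw [Fin.val_succ, ha])
        rw [hsucc, htop]
        exact Fin.ext ha.symm
    have hcomp2 : g.1 ∘ coface n (n+1) = id := by
      funext a
      rw [Function.comp_apply]
      show g.1 (Fin.succAbove ⟨min (n+1) (n+1), by omega⟩ a) = a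
      rw [Fin.succAbove_of_castSucc_lt _ _ (by
        have := a.isLt
        simp only [Fin.lt_def, Fin.coe_castSucc, Fin.val_mk]
        omega)]
      have hcast : (a.castSucc : Fin (n+2)) = ⟨(a:ℕ), by omega⟩ := Fin.ext (by simp)
      rw [hcast, hinit (a:ℕ) (by omega)]
    have hs1 : Surjective (g.1 ∘ coface n n) := hcomp1 ▸ surjective_id
    have hs2 : Surjective (g.1 ∘ coface n (n+1)) := hcomp2 ▸ surjective_id
    rw [← hzn, ← hzn1, sphss_d_some n g hs1, sphss_d_some (n+1) g hs2]
    exact congrArg some (Subtype.ext (hcomp1.trans hcomp2.symm))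

theorem mk_inj {n : ℕ} : Injective (Quot.mk ((SphSS n).Rel n)) := fun a b h =>
  congrArg (Quot.lift id (fun a b r => rel_eq a b r)) h

theorem ne_classes {n : ℕ} :
    (Quot.mk _ (idSph n) : (SphSS n).picomb n) ≠ (SphSS n).picombPt n := fun h =>
  absurd (congrArg Subtype.val (mk_inj h)) (Option.some_ne_none _)

theorem class_cases {n : ℕ} (c : (SphSS n).picomb n) :
    c = (SphSS n).picombPt n ∨ c = Quot.mk _ (idSph n) := by
  induction c using Quot.ind with
  | _ a =>
    rcases obj_n_cases a.1 with h | h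
    · exact Or.inl (congrArg (Quot.mk ((SphSS n).Rel n)) (Subtype.ext h))
    · exact Or.inr (congrArg (Quot.mk ((SphSS n).Rel n)) (Subtype.ext h))

open Classical in
noncomputable def E2 (n k : ℕ) :
    Smash ((SphSS n).picomb n) ((SphSS n).picombPt n) k ≃ Fin (k+1) where
  toFun := Quot.lift (fun p => if p.1 = (SphSS n).picombPt n then 0 else p.2) (by
    have h : ∀ p : (SphSS n).picomb n × Fin (k+1), (p.1 = (SphSS n).picombPt n ∨ p.2 = 0) →
        (if p.1 = (SphSS n).picombPt n then 0 else p.2) = 0 := by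
      rintro p (h | h)
      · rw [if_pos h]
      · rw [h]; split <;> rfl
    rintro u v ⟨hu, hv⟩
    show (if u.1 = _ then _ else u.2) = (if v.1 = _ then _ else v.2)
    rw [h u hu, h v hv])
  invFun := fun i => Quot.mk _ (Quot.mk _ (idSph n), i)
  left_inv := by
    intro s
    induction s using Quot.ind with
    | _ p =>
      obtain ⟨c, i⟩ := p
      show Quot.mk _ (Quot.mk _ (idSph n), if c = (SphSS n).picombPt n then 0 else i) =
        Quot.mk _ (c, i)
      rcases class_cases c with h | h
      · rw [if_pos h, h]
        exact Quot.sound ⟨Or.inr rfl, Or.inl rfl⟩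
      · rw [if_neg (h ▸ ne_classes), h]; rfl
  right_inv := fun i => by
    show (if (Quot.mk _ (idSph n) : (SphSS n).picomb n) = (SphSS n).picombPt n then 0 else i) = i
    rw [if_neg ne_classes]

end SphComp


open PSS SphComp in
/-- Homology with coefficients in the sphere `Γ`-set `𝔰` (the identity endofunctor):
for any pointed simplicial set `X`, `H_n(X, 𝔰)(k₊) = π^comb_n(X ∧ k₊) = π^comb_n(X) ∧ k₊`;
in particular `H_m(Sⁿ, 𝔰) = {*}` for `m ≠ n`, and `H_n(Sⁿ, 𝔰) = 𝔰`, i.e.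
`H_n(Sⁿ, 𝔰)(k₊) ≅ k₊`. -/
theorem stmt12 (X : PSS) (n k : ℕ) (hk : 0 < k) :
    Nonempty ((X.smash k).picomb n ≃ Smash (X.picomb n) (X.picombPt n) k) ∧
    (∀ m, m ≠ n → (∀ a b : ((SphSS n).smash k).picomb m, a = b) ∧
      Nonempty (((SphSS n).smash k).picomb m)) ∧
    Nonempty (((SphSS n).smash k).picomb n ≃ Fin (k + 1)) := by

  refine ⟨⟨smashPicombEquiv X k n⟩, fun m hm => ⟨?_, ⟨((SphSS n).smash k).picombPt m⟩⟩,
    ⟨(smashPicombEquiv (SphSS n) k n).trans (E2 n k)⟩⟩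
  have hsub : ∀ q : ((SphSS n).smash k).obj m,
      ((SphSS n).smash k).isSph m q → q = ((SphSS n).smash k).pt m := by
    intro q
    induction q using Quot.ind with
    | _ p =>
      obtain ⟨x, i⟩ := p
      intro hq
      rcases sph_cases hq with hi | hx
      · subst hi
        exact smash_mk_pt (Or.inr rfl)
      · exact smash_mk_pt (Or.inl (sphss_sph hm x hx))
  have key : ∀ a : ((SphSS n).smash k).Sph m,
      Quot.mk (((SphSS n).smash k).Rel m) a = Quot.mk _ (((SphSS n).smash k).sphPt m) := fun a =>
    congrArg (Quot.mk (((SphSS n).smash k).Rel m)) (Subtype.ext (hsub a.1 a.2))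
  intro a b
  induction a using Quot.ind with
  | _ a =>
    induction b using Quot.ind with
    | _ b => rw [key a, key b]
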